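/- The 4-dimensional Lebesgue volume of the ball B′(0,r) = {x ∈ ℝ⁴ : max{√(x₀²+x₁²), √(x₀²+x₂²), √(x₀²+x₃²)} < r} equals 16·∫₀^r (r²−t²)^{3/2} dt, which equals (6/π) times the volume of the Euclidean 4-ball of radius r. -/

import Mathlib

set_option maxHeartbeats 1000000


open MeasureTheory Real

private lemma vol_aux_cos4 : ∫ x in (0:ℝ)..(π/2), Real.cos x ^ 4 = 3 * π / 16 := by
  have h := integral_cos_pow (a := 0) (b := π/2) 2
  norm_num [Real.cos_pi_div_two, Real.sin_pi_div_two] at h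
  rw [show (4:ℕ) = 2 + 2 from rfl, h]; ring

private lemma vol_aux_int01 : ∫ u in (0:ℝ)..1, (1 - u ^ 2) ^ ((3:ℝ)/2) = 3 * π / 16 := by
  have contg : Continuous (fun u : ℝ => (1 - u ^ 2) ^ ((3:ℝ)/2)) := by
    apply Continuous.rpow_const (continuous_const.sub (continuous_pow 2))
    intro x; right; norm_num
  have hsub := intervalIntegral.integral_comp_smul_deriv (f := Real.sin) (f' := Real.cos)
    (g := fun u : ℝ => (1 - u ^ 2) ^ ((3:ℝ)/2)) (a := 0) (b := π/2)
    (fun x _ => Real.hasDerivAt_sin x) (Real.continuous_cos.continuousOn) contg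
  simp only [Real.sin_zero, Real.sin_pi_div_two] at hsub
  rw [← hsub, ← vol_aux_cos4]
  apply intervalIntegral.integral_congr
  intro x hx
  rw [Set.uIcc_of_le (by positivity)] at hx
  have hc : 0 ≤ Real.cos x := Real.cos_nonneg_of_mem_Icc
    ⟨by linarith [hx.1, Real.pi_pos], hx.2⟩
  have h1 : (1 : ℝ) - Real.sin x ^ 2 = Real.cos x ^ 2 := by
    nlinarith [Real.sin_sq_add_cos_sq x]
  simp only [Function.comp, smul_eq_mul, h1]
  rw [show ((3:ℝ)/2) = (1/2 : ℝ) * (3:ℕ) by norm_num, Real.rpow_mul (sq_nonneg _),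
    Real.rpow_natCast, ← Real.sqrt_eq_rpow, Real.sqrt_sq hc]
  ring

private lemma vol_aux_keyInt (r : ℝ) (hr : 0 < r) :
    ∫ t in (0:ℝ)..r, (r ^ 2 - t ^ 2) ^ ((3:ℝ)/2) = 3 * π / 16 * r ^ 4 := by
  have h := intervalIntegral.integral_comp_mul_left (a := 0) (b := 1)
    (f := fun t : ℝ => (r ^ 2 - t ^ 2) ^ ((3:ℝ)/2)) (c := r) hr.ne'
  simp only [mul_zero, mul_one, smul_eq_mul] at h
  have h2 : ∫ x in (0:ℝ)..1, (r ^ 2 - (r * x) ^ 2) ^ ((3:ℝ)/2)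
      = r ^ 3 * ∫ u in (0:ℝ)..1, (1 - u ^ 2) ^ ((3:ℝ)/2) := by
    rw [← intervalIntegral.integral_const_mul]
    apply intervalIntegral.integral_congr
    intro x hx
    rw [Set.uIcc_of_le (by norm_num)] at hx
    have h1 : (1 : ℝ) - x ^ 2 ≥ 0 := by nlinarith [hx.1, hx.2]
    simp only []
    rw [show r ^ 2 - (r * x) ^ 2 = r ^ 2 * (1 - x ^ 2) by ring,
      Real.mul_rpow (by positivity) h1,
      show ((3:ℝ)/2) = (1/2 : ℝ) * (3:ℕ) by norm_num,
      Real.rpow_mul (sq_nonneg r), Real.rpow_natCast, ← Real.sqrt_eq_rpow,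
      Real.sqrt_sq hr.le]
  rw [h2, vol_aux_int01] at h
  field_simp at h
  linarith [h]

/-- The 4-dimensional Lebesgue volume of B′(0,r) equals 16·∫₀^r (r²−t²)^{3/2} dt,
which is (6/π) times the volume of the Euclidean 4-ball of radius r. -/
theorem volume_qn'_ball (r : ℝ) (hr : 0 < r) :
    volume {x : EuclideanSpace ℝ (Fin 4) |
        max (max (Real.sqrt (x 0 ^ 2 + x 1 ^ 2)) (Real.sqrt (x 0 ^ 2 + x 2 ^ 2)))
          (Real.sqrt (x 0 ^ 2 + x 3 ^ 2)) < r} =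
      ENNReal.ofReal (16 * ∫ t in (0 : ℝ)..r, (r ^ 2 - t ^ 2) ^ ((3 : ℝ) / 2)) ∧
    volume {x : EuclideanSpace ℝ (Fin 4) |
        max (max (Real.sqrt (x 0 ^ 2 + x 1 ^ 2)) (Real.sqrt (x 0 ^ 2 + x 2 ^ 2)))
          (Real.sqrt (x 0 ^ 2 + x 3 ^ 2)) < r} =
      ENNReal.ofReal (6 / π) * volume (Metric.ball (0 : EuclideanSpace ℝ (Fin 4)) r) := by
  set g : ℝ → ℝ := fun t => Real.sqrt (r ^ 2 - t ^ 2) with hgdef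
  have hgcont : Continuous g := by fun_prop
  set S : Set (EuclideanSpace ℝ (Fin 4)) := {x |
        max (max (Real.sqrt (x 0 ^ 2 + x 1 ^ 2)) (Real.sqrt (x 0 ^ 2 + x 2 ^ 2)))
          (Real.sqrt (x 0 ^ 2 + x 3 ^ 2)) < r} with hSdef
  set U : Set (ℝ × (Fin 3 → ℝ)) := {p | |p.1| < r ∧ ∀ i, |p.2 i| < g p.1} with hUdef
  -- S is open
  have hSopen : IsOpen S := by
    apply isOpen_lt _ continuous_const
    fun_prop
  -- transfer to pi space
  have e1 := (EuclideanSpace.volume_preserving_symm_measurableEquiv_toLp (Fin 4)).symm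
  have h1 : volume ((MeasurableEquiv.toLp 2 (Fin 4 → ℝ)) ⁻¹' S) = volume S :=
    e1.measure_preimage hSopen.measurableSet.nullMeasurableSet
  -- preimage under piFinSuccAbove
  have hset : (MeasurableEquiv.piFinSuccAbove (fun _ : Fin 4 => ℝ) 0) ⁻¹' U =
      (MeasurableEquiv.toLp 2 (Fin 4 → ℝ)) ⁻¹' S := by
    ext y
    have happ : ∀ i, (MeasurableEquiv.toLp 2 (Fin 4 → ℝ)) y i = y i := fun i => rfl
    simp only [Set.mem_preimage, hUdef, hSdef, Set.mem_setOf_eq, happ,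
      ]
    have hfst : ((MeasurableEquiv.piFinSuccAbove (fun _ : Fin 4 => ℝ) 0) y).1 = y 0 := rfl
    have hsnd : ∀ i : Fin 3, ((MeasurableEquiv.piFinSuccAbove (fun _ : Fin 4 => ℝ) 0) y).2 i
        = y i.succ := fun i => rfl
    simp only [hfst, hsnd, Fin.forall_fin_succ, Fin.forall_fin_zero_pi, Fin.succ_zero_eq_one]
    rw [show (Fin.succ 1 : Fin 4) = 2 by rfl, show ((Fin.succ (1 : Fin 2)).succ : Fin 4) = 3 by rfl]
    simp only [IsEmpty.forall_iff, and_true]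
    rw [sup_lt_iff, sup_lt_iff, hgdef]
    have hs : ∀ a b : ℝ, Real.sqrt (a ^ 2 + b ^ 2) < r ↔ a ^ 2 + b ^ 2 < r ^ 2 :=
      fun a b => Real.sqrt_lt' hr
    rw [hs, hs, hs]
    constructor
    · rintro ⟨h0, h1, h2, h3⟩
      have hnn : (0:ℝ) ≤ r ^ 2 - y 0 ^ 2 := by nlinarith [sq_abs (y 0), abs_nonneg (y 0)]
      have hsq := Real.sq_sqrt hnn
      refine ⟨⟨?_, ?_⟩, ?_⟩ <;>
        nlinarith [sq_abs (y 1), sq_abs (y 2), sq_abs (y 3), abs_nonneg (y 1), abs_nonneg (y 2),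
          abs_nonneg (y 3), Real.sqrt_nonneg (r ^ 2 - y 0 ^ 2), h1, h2, h3, hsq]
    · rintro ⟨⟨h1, h2⟩, h3⟩
      have h0 : |y 0| < r := by nlinarith [sq_abs (y 0), abs_nonneg (y 0), sq_nonneg (y 1)]
      refine ⟨h0, ?_, ?_, ?_⟩ <;>
        · rw [Real.lt_sqrt (abs_nonneg _), sq_abs]; linarith
  -- measurability of U
  have hU : MeasurableSet U := by
    have h1' : MeasurableSet {p : ℝ × (Fin 3 → ℝ) | |p.1| < r} :=
      measurableSet_lt measurable_fst.abs measurable_const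
    have h2' : ∀ i : Fin 3, MeasurableSet {p : ℝ × (Fin 3 → ℝ) | |p.2 i| < g p.1} := fun i =>
      measurableSet_lt (by fun_prop) (hgcont.measurable.comp measurable_fst)
    have : U = {p : ℝ × (Fin 3 → ℝ) | |p.1| < r} ∩ ⋂ i, {p | |p.2 i| < g p.1} := by
      ext p; simp [hUdef]
    rw [this]
    exact h1'.inter (MeasurableSet.iInter h2')
  -- slices
  have hslice : ∀ t : ℝ, (volume : Measure (Fin 3 → ℝ)) (Prod.mk t ⁻¹' U) =
      (Set.Ioo (-r) r).indicator
        (fun t => ENNReal.ofReal (8 * (r ^ 2 - t ^ 2) ^ ((3:ℝ)/2))) t := by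
    intro t
    by_cases ht : t ∈ Set.Ioo (-r) r
    · have htr : |t| < r := abs_lt.mpr ⟨ht.1, ht.2⟩
      have hpre : Prod.mk t ⁻¹' U =
          Set.pi Set.univ (fun _ : Fin 3 => Set.Ioo (-(g t)) (g t)) := by
        ext b
        simp only [hUdef, Set.mem_preimage, Set.mem_setOf_eq, htr, true_and, Set.mem_pi,
          Set.mem_univ, Set.mem_Ioo, abs_lt, forall_and, forall_true_left]
        exact ⟨fun h => h.2, fun h => ⟨⟨ht.1, ht.2⟩, h⟩⟩
      have hnn : (0:ℝ) ≤ r ^ 2 - t ^ 2 := by nlinarith [ht.1, ht.2]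
      rw [hpre, volume_pi_pi]
      simp only [Real.volume_Ioo, Finset.prod_const, Finset.card_univ, Fintype.card_fin]
      rw [Set.indicator_of_mem ht,
        ← ENNReal.ofReal_pow (by simp only [hgdef, sub_neg_eq_add]; positivity)]
      congr 1
      rw [hgdef]
      simp only []
      rw [show Real.sqrt (r ^ 2 - t ^ 2) - -Real.sqrt (r ^ 2 - t ^ 2)
          = 2 * Real.sqrt (r ^ 2 - t ^ 2) by ring,
        Real.sqrt_eq_rpow]
      rw [show (2 * (r ^ 2 - t ^ 2) ^ ((1:ℝ)/2)) ^ 3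
          = 8 * (((r ^ 2 - t ^ 2) ^ ((1:ℝ)/2)) ^ (3:ℕ)) by ring,
        ← Real.rpow_natCast ((r ^ 2 - t ^ 2) ^ ((1:ℝ)/2)) 3, ← Real.rpow_mul hnn]
      norm_num
    · have htr : ¬ |t| < r := fun h => ht ⟨(abs_lt.mp h).1, (abs_lt.mp h).2⟩
      have hpre : Prod.mk t ⁻¹' U = ∅ := by
        ext b; simp [hUdef, htr]
      rw [hpre, Set.indicator_of_notMem ht, measure_empty]
  -- integrand facts
  have hfc : Continuous (fun t : ℝ => 8 * (r ^ 2 - t ^ 2) ^ ((3:ℝ)/2)) := by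
    apply Continuous.mul continuous_const
    apply Continuous.rpow_const (continuous_const.sub (continuous_pow 2))
    intro x; right; norm_num
  have hint : IntegrableOn (fun t : ℝ => 8 * (r ^ 2 - t ^ 2) ^ ((3:ℝ)/2)) (Set.Ioo (-r) r) :=
    (hfc.integrableOn_Icc).mono_set Set.Ioo_subset_Icc_self
  have hnn : 0 ≤ᵐ[volume.restrict (Set.Ioo (-r) r)]
      fun t : ℝ => 8 * (r ^ 2 - t ^ 2) ^ ((3:ℝ)/2) := by
    refine ae_restrict_of_forall_mem measurableSet_Ioo fun t ht => ?_
    have h : (0:ℝ) ≤ r ^ 2 - t ^ 2 := by nlinarith [ht.1, ht.2]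
    positivity
  have hconv := ofReal_integral_eq_lintegral_ofReal hint hnn
  have hIoo : (∫ t in Set.Ioo (-r) r, 8 * (r ^ 2 - t ^ 2) ^ ((3:ℝ)/2))
      = 16 * ∫ t in (0:ℝ)..r, (r ^ 2 - t ^ 2) ^ ((3:ℝ)/2) := by
    rw [← MeasureTheory.integral_Ioc_eq_integral_Ioo,
      ← intervalIntegral.integral_of_le (by linarith : -r ≤ r)]
    have heven : (∫ t in (-r)..(0:ℝ), 8 * (r ^ 2 - t ^ 2) ^ ((3:ℝ)/2))
        = ∫ t in (0:ℝ)..r, 8 * (r ^ 2 - t ^ 2) ^ ((3:ℝ)/2) := by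
      have h := intervalIntegral.integral_comp_neg (a := (0:ℝ)) (b := r)
        (fun t => 8 * (r ^ 2 - t ^ 2) ^ ((3:ℝ)/2))
      simp only [neg_zero, neg_sq] at h
      rw [← h]
    have hi1 : IntervalIntegrable (fun t : ℝ => 8 * (r ^ 2 - t ^ 2) ^ ((3:ℝ)/2)) volume (-r) 0 :=
      hfc.intervalIntegrable _ _
    have hi2 : IntervalIntegrable (fun t : ℝ => 8 * (r ^ 2 - t ^ 2) ^ ((3:ℝ)/2)) volume 0 r :=
      hfc.intervalIntegrable _ _
    have hsplit := intervalIntegral.integral_add_adjacent_intervals hi1 hi2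
    rw [← hsplit, heven, intervalIntegral.integral_const_mul]
    ring
  -- main volume computation
  have main : volume S = ENNReal.ofReal (16 * ∫ t in (0:ℝ)..r, (r ^ 2 - t ^ 2) ^ ((3:ℝ)/2)) := by
    rw [← h1, ← hset]
    have e2 := measurePreserving_piFinSuccAbove (fun _ : Fin 4 => (volume : Measure ℝ)) 0
    have h2 := e2.measure_preimage hU.nullMeasurableSet
    rw [show (Measure.pi fun _ : Fin 4 => (volume : Measure ℝ)) = volume from volume_pi.symm,
      show (Measure.pi fun _ : Fin 3 => (volume : Measure ℝ)) = volume from volume_pi.symm] at h2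
    rw [h2, Measure.prod_apply hU]
    simp_rw [hslice]
    rw [lintegral_indicator measurableSet_Ioo _, ← hconv, hIoo]
  refine ⟨main, ?_⟩
  rw [main, EuclideanSpace.volume_ball, vol_aux_keyInt r hr]
  simp only [Fintype.card_fin]
  rw [show ((4:ℕ) : ℝ) / 2 + 1 = ((2:ℕ) : ℝ) + 1 by norm_num, Real.Gamma_nat_eq_factorial]
  have hsq : Real.sqrt π ^ 4 = π ^ 2 := by
    rw [show (4:ℕ) = 2 * 2 from rfl, pow_mul, Real.sq_sqrt Real.pi_nonneg]
  rw [hsq, ← ENNReal.ofReal_pow hr.le, ← ENNReal.ofReal_mul (by positivity),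
    ← ENNReal.ofReal_mul (by positivity)]
  congr 1
  have hπ : π ≠ 0 := Real.pi_ne_zero
  field_simp
  ring
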